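/- There exists a universal constant C > 0 such that for every n ≥ 1, all real numbers d, d* ∈ [0, 2), and every partition λ ⊢ 2n with λ_1 ≥ d·n and λ*_1 ≥ d*·n, one has f_λ² ≤ exp((2 − d − d*)·n·log n + C·n). -/

import Mathlib

open scoped BigOperators

noncomputable section

namespace BRT

/-- A semistandard tableau is standard if each value `k < |μ|` occurs in exactly one cell. -/
def IsStandard (μ : YoungDiagram) (T : SemistandardYoungTableau μ) : Prop :=
  ∀ k < μ.card, ∃! c : ℕ × ℕ, c ∈ μ.cells ∧ T c.1 c.2 = k

/-- `fSYT μ` is the number of standard Young tableaux of shape `μ`. -/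
def fSYT (μ : YoungDiagram) : ℕ :=
  Nat.card {T : SemistandardYoungTableau μ // IsStandard μ T}

/-- corners of a Young diagram -/
def corners (μ : YoungDiagram) : Finset (ℕ × ℕ) :=
  μ.cells.filter (fun c => (c.1 + 1, c.2) ∉ μ ∧ (c.1, c.2 + 1) ∉ μ)

lemma mem_corners {μ : YoungDiagram} {c : ℕ × ℕ} :
    c ∈ corners μ ↔ c ∈ μ ∧ (c.1 + 1, c.2) ∉ μ ∧ (c.1, c.2 + 1) ∉ μ := by
  simp [corners, YoungDiagram.mem_cells]

lemma erase_isLowerSet {μ : YoungDiagram} {c : ℕ × ℕ} (hc : c ∈ corners μ) :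
    IsLowerSet (↑(μ.cells.erase c) : Set (ℕ × ℕ)) := by
  rw [mem_corners] at hc
  intro y x hxy hy
  simp only [Finset.coe_erase, Set.mem_diff, Finset.mem_coe, YoungDiagram.mem_cells,
    Set.mem_singleton_iff] at hy ⊢
  refine ⟨μ.isLowerSet hxy hy.1, ?_⟩
  intro hxc
  subst hxc
  rcases hxy with ⟨h1, h2⟩
  rcases lt_or_eq_of_le h1 with h1 | h1
  · exact hc.2.1 (μ.isLowerSet (by exact ⟨h1, h2⟩ : (x.1 + 1, x.2) ≤ y) hy.1)
  · rcases lt_or_eq_of_le h2 with h2 | h2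
    · exact hc.2.2 (μ.isLowerSet (by exact ⟨le_of_eq h1, h2⟩ : (x.1, x.2 + 1) ≤ y) hy.1)
    · exact hy.2 (Prod.ext h1.symm h2.symm)

/-- erase a corner from a Young diagram -/
def eraseCorner (μ : YoungDiagram) (c : ℕ × ℕ) (hc : c ∈ corners μ) : YoungDiagram :=
  ⟨μ.cells.erase c, erase_isLowerSet hc⟩

lemma mem_eraseCorner {μ : YoungDiagram} {c x : ℕ × ℕ} (hc : c ∈ corners μ) :
    x ∈ eraseCorner μ c hc ↔ x ∈ μ ∧ x ≠ c := by
  show x ∈ μ.cells.erase c ↔ _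
  rw [Finset.mem_erase]
  simp [YoungDiagram.mem_cells, and_comm]

lemma eraseCorner_card {μ : YoungDiagram} {c : ℕ × ℕ} (hc : c ∈ corners μ) :
    (eraseCorner μ c hc).card = μ.card - 1 :=
  Finset.card_erase_of_mem ((mem_corners.mp hc).1)

/-- every entry of a standard tableau is `< μ.card` -/
lemma IsStandard.lt_card {μ : YoungDiagram} {T : SemistandardYoungTableau μ}
    (hT : IsStandard μ T) {x : ℕ × ℕ} (hx : x ∈ μ.cells) : T x.1 x.2 < μ.card := by
  classical
  -- the map sending k : Fin μ.card to the unique cell with entry k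
  have hex : ∀ k : Fin μ.card, ∃! c : ℕ × ℕ, c ∈ μ.cells ∧ T c.1 c.2 = k := fun k =>
    hT k k.2
  choose V hV hV' using fun k : Fin μ.card => (hex k).exists
  have hVinj : Function.Injective V := by
    intro k1 k2 h
    have := hV' k1
    have := hV' k2
    apply Fin.ext
    rw [← this, ← hV' k1, h]
  -- V : Fin μ.card → cells, injective, so surjective onto cells
  let W : Fin μ.card → {c : ℕ × ℕ // c ∈ μ.cells} := fun k => ⟨V k, hV k⟩
  have hWinj : Function.Injective W := by
    intro k1 k2 h
    exact hVinj (congrArg Subtype.val h)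
  have hcard : Fintype.card {c : ℕ × ℕ // c ∈ μ.cells} = Fintype.card (Fin μ.card) := by
    simp [Fintype.card_coe, YoungDiagram.card]
  have hWsurj : Function.Surjective W :=
    ((Fintype.bijective_iff_injective_and_card W).mpr ⟨hWinj, hcard.symm⟩).2
  obtain ⟨k, hk⟩ := hWsurj ⟨x, hx⟩
  have : V k = x := congrArg Subtype.val hk
  rw [← this, hV' k]
  exact k.2

instance instFiniteSYT (μ : YoungDiagram) :
    Finite {T : SemistandardYoungTableau μ // IsStandard μ T} := by
  classical
  let F : {T : SemistandardYoungTableau μ // IsStandard μ T} →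
      ({c : ℕ × ℕ // c ∈ μ.cells} → Fin (μ.card + 1)) := fun T c =>
    ⟨T.1 c.1.1 c.1.2, lt_of_lt_of_le (T.2.lt_card c.2) (Nat.le_succ _)⟩
  have hF : Function.Injective F := by
    intro T S h
    ext i j
    by_cases hij : (i, j) ∈ μ
    · have := congrFun h ⟨(i, j), by simpa using hij⟩
      exact congrArg Fin.val this
    · rw [T.1.zeros hij, S.1.zeros hij]
  exact Finite.of_injective F hF



section Branch
variable {μ : YoungDiagram}

/-- removing a corner cell from a tableau -/
def restrictCell (T : SemistandardYoungTableau μ) (c : ℕ × ℕ) (hc : c ∈ corners μ) :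
    SemistandardYoungTableau (eraseCorner μ c hc) where
  entry := fun i j => if (i, j) = c then 0 else T i j
  row_weak' := by
    intro i j1 j2 hj hcell
    rw [mem_eraseCorner] at hcell
    have hne1 : (i, j1) ≠ c := by
      intro h
      apply (mem_corners.mp hc).2.2
      rw [← h]
      exact μ.isLowerSet (by exact ⟨le_rfl, by omega⟩ : (i, j1 + 1) ≤ (i, j2)) hcell.1
    simp only [if_neg hne1, if_neg hcell.2]
    exact T.row_weak hj hcell.1
  col_strict' := by
    intro i1 i2 j hi hcell
    rw [mem_eraseCorner] at hcell
    have hne1 : (i1, j) ≠ c := by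
      intro h
      apply (mem_corners.mp hc).2.1
      rw [← h]
      exact μ.isLowerSet (by exact ⟨by omega, le_rfl⟩ : (i1 + 1, j) ≤ (i2, j)) hcell.1
    simp only [if_neg hne1, if_neg hcell.2]
    exact T.col_strict hi hcell.1
  zeros' := by
    intro i j hij
    rw [mem_eraseCorner] at hij
    by_cases h : (i, j) = c
    · simp only [if_pos h]
    · simp only [if_neg h]
      exact T.zeros (fun hm => hij ⟨hm, h⟩)

lemma restrictCell_entry (T : SemistandardYoungTableau μ) (c : ℕ × ℕ) (hc : c ∈ corners μ)
    (i j : ℕ) : (restrictCell T c hc) i j = if (i, j) = c then 0 else T i j := rfl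

variable (hμ : μ.card ≠ 0)

/-- the cell of a standard tableau holding the top value `μ.card - 1` -/
def topCell (T : {T : SemistandardYoungTableau μ // IsStandard μ T}) : ℕ × ℕ :=
  (T.2 (μ.card - 1) (Nat.sub_lt (Nat.pos_of_ne_zero hμ) one_pos)).exists.choose

lemma topCell_spec (T : {T : SemistandardYoungTableau μ // IsStandard μ T}) :
    topCell hμ T ∈ μ.cells ∧ T.1 (topCell hμ T).1 (topCell hμ T).2 = μ.card - 1 :=
  (T.2 (μ.card - 1) (Nat.sub_lt (Nat.pos_of_ne_zero hμ) one_pos)).exists.choose_spec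

lemma topCell_unique (T : {T : SemistandardYoungTableau μ // IsStandard μ T})
    {y : ℕ × ℕ} (hy : y ∈ μ.cells) (hy' : T.1 y.1 y.2 = μ.card - 1) :
    y = topCell hμ T := by
  obtain ⟨c, hc, hun⟩ := T.2 (μ.card - 1) (Nat.sub_lt (Nat.pos_of_ne_zero hμ) one_pos)
  rw [hun y ⟨hy, hy'⟩, hun (topCell hμ T) ⟨(topCell_spec hμ T).1, (topCell_spec hμ T).2⟩]

lemma topCell_corner (T : {T : SemistandardYoungTableau μ // IsStandard μ T}) :
    topCell hμ T ∈ corners μ := by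
  obtain ⟨hmem, hval⟩ := topCell_spec hμ T
  rw [mem_corners]
  refine ⟨by simpa using hmem, ?_, ?_⟩
  · intro h
    have h1 : T.1 (topCell hμ T).1 (topCell hμ T).2 < T.1 ((topCell hμ T).1 + 1) (topCell hμ T).2 :=
      T.1.col_strict (lt_add_one _) h
    have h2 : T.1 ((topCell hμ T).1 + 1) (topCell hμ T).2 < μ.card := T.2.lt_card (by simpa using h)
    omega
  · intro h
    have h1 : T.1 (topCell hμ T).1 (topCell hμ T).2 ≤ T.1 (topCell hμ T).1 ((topCell hμ T).2 + 1) :=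
      T.1.row_weak (lt_add_one _) h
    have h2 : T.1 (topCell hμ T).1 ((topCell hμ T).2 + 1) < μ.card := T.2.lt_card (by simpa using h)
    have h3 : T.1 (topCell hμ T).1 ((topCell hμ T).2 + 1) = μ.card - 1 := by omega
    have h4 := topCell_unique hμ T (y := ((topCell hμ T).1, (topCell hμ T).2 + 1)) (by simpa using h) h3
    have : (topCell hμ T).2 + 1 = (topCell hμ T).2 := congrArg Prod.snd h4
    omega

/-- restriction of a standard tableau to the diagram minus its top corner -/
def restrict (T : {T : SemistandardYoungTableau μ // IsStandard μ T}) :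
    SemistandardYoungTableau (eraseCorner μ (topCell hμ T) (topCell_corner hμ T)) :=
  restrictCell T.1 (topCell hμ T) (topCell_corner hμ T)

lemma restrict_standard (T : {T : SemistandardYoungTableau μ // IsStandard μ T}) :
    IsStandard _ (restrict hμ T) := by
  classical
  intro k hk
  rw [eraseCorner_card] at hk
  obtain ⟨x, ⟨hx, hxval⟩, hun⟩ := T.2 k (by omega)
  have hxc : x ≠ topCell hμ T := by
    intro h
    rw [h, (topCell_spec hμ T).2] at hxval
    omega
  refine ⟨x, ⟨?_, ?_⟩, ?_⟩
  · show x ∈ (eraseCorner _ _ _).cells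
    rw [YoungDiagram.mem_cells, mem_eraseCorner]
    exact ⟨by simpa using hx, hxc⟩
  · rw [restrict, restrictCell_entry, if_neg (by simpa using hxc)]
    exact hxval
  · rintro y ⟨hy, hyval⟩
    rw [YoungDiagram.mem_cells, mem_eraseCorner] at hy
    rw [restrict, restrictCell_entry, if_neg (by simpa using hy.2)] at hyval
    exact hun y ⟨by simpa using hy.1, hyval⟩

lemma nat_card_sigma {ι : Type*} [Fintype ι] (f : ι → Type*) [∀ i, Finite (f i)] :
    Nat.card (Σ i, f i) = ∑ i, Nat.card (f i) := by
  letI : ∀ i, Fintype (f i) := fun i => Fintype.ofFinite (f i)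
  simp [Nat.card_eq_fintype_card, Fintype.card_sigma]

include hμ in
lemma fSYT_le_sum_corners :
    fSYT μ ≤ ∑ c ∈ (corners μ).attach, fSYT (eraseCorner μ c.1 c.2) := by
  classical
  set F : {x // x ∈ corners μ} → Type := fun c =>
    {T : SemistandardYoungTableau (eraseCorner μ c.1 c.2) //
      IsStandard (eraseCorner μ c.1 c.2) T} with hF
  have key : fSYT μ ≤ Nat.card (Σ c : {x // x ∈ corners μ}, F c) := by
    apply Nat.card_le_card_of_injective
      (fun T => (⟨⟨topCell hμ T, topCell_corner hμ T⟩,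
        ⟨restrict hμ T, restrict_standard hμ T⟩⟩ : Σ c : {x // x ∈ corners μ}, F c))
    intro T S h
    have hc : topCell hμ T = topCell hμ S :=
      congrArg (fun p : Σ c : {x // x ∈ corners μ}, F c => p.1.1) h
    have hent : ∀ i j, (restrict hμ T) i j = (restrict hμ S) i j := by
      intro i j
      exact congrFun (congrFun (congrArg
        (fun p : Σ c : {x // x ∈ corners μ}, F c => p.2.1.entry) h) i) j
    apply Subtype.ext
    ext i j
    by_cases hij : (i, j) = topCell hμ T
    · have hi : i = (topCell hμ T).1 := congrArg Prod.fst hij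
      have hj : j = (topCell hμ T).2 := congrArg Prod.snd hij
      rw [hi, hj]
      have hT := (topCell_spec hμ T).2
      have hS := (topCell_spec hμ S).2
      rw [← hc] at hS
      show T.1 _ _ = S.1 _ _
      rw [hT, hS]
    · have h1 := hent i j
      rw [restrict, restrictCell_entry, if_neg hij] at h1
      rw [restrict, restrictCell_entry, if_neg (by rw [← hc]; exact hij)] at h1
      exact h1
  rw [nat_card_sigma] at key
  rw [Finset.univ_eq_attach] at key
  exact key

end Branch


/-- the number of cells strictly inside the first row and column -/
def innerm (μ : YoungDiagram) : ℕ :=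
  (μ.cells.filter (fun c => c.1 ≠ 0 ∧ c.2 ≠ 0)).card

lemma corners_eq_of_row_eq {μ : YoungDiagram} {c c' : ℕ × ℕ}
    (hc : c ∈ corners μ) (hc' : c' ∈ corners μ) (h : c.1 = c'.1) : c = c' := by
  rw [mem_corners] at hc hc'
  by_contra hne
  have h2 : c.2 ≠ c'.2 := fun h2 => hne (Prod.ext h h2)
  rcases Nat.lt_or_ge c.2 c'.2 with hlt | hge
  · exact hc.2.2 (μ.isLowerSet (by exact ⟨le_of_eq h, by omega⟩ : (c.1, c.2 + 1) ≤ c') hc'.1)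
  · have hlt : c'.2 < c.2 := by omega
    exact hc'.2.2 (μ.isLowerSet (by exact ⟨le_of_eq h.symm, by omega⟩ : (c'.1, c'.2 + 1) ≤ c) hc.1)

lemma corners_eq_of_col_eq {μ : YoungDiagram} {c c' : ℕ × ℕ}
    (hc : c ∈ corners μ) (hc' : c' ∈ corners μ) (h : c.2 = c'.2) : c = c' := by
  rw [mem_corners] at hc hc'
  by_contra hne
  have h1 : c.1 ≠ c'.1 := fun h1 => hne (Prod.ext h1 h)
  rcases Nat.lt_or_ge c.1 c'.1 with hlt | hge
  · exact hc.2.1 (μ.isLowerSet (by exact ⟨by omega, le_of_eq h⟩ : (c.1 + 1, c.2) ≤ c') hc'.1)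
  · have hlt : c'.1 < c.1 := by omega
    exact hc'.2.1 (μ.isLowerSet (by exact ⟨by omega, le_of_eq h.symm⟩ : (c'.1 + 1, c'.2) ≤ c) hc.1)

lemma innerm_erase_special {μ : YoungDiagram} {c : ℕ × ℕ} (hc : c ∈ corners μ)
    (h : c.1 = 0 ∨ c.2 = 0) : innerm (eraseCorner μ c hc) = innerm μ := by
  show ((μ.cells.erase c).filter _).card = _
  rw [Finset.filter_erase]
  rw [Finset.erase_eq_of_notMem]
  · rfl
  · simp only [Finset.mem_filter]
    rintro ⟨-, h1, h2⟩
    rcases h with h | h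
    · exact h1 h
    · exact h2 h

lemma innerm_erase_inner {μ : YoungDiagram} {c : ℕ × ℕ} (hc : c ∈ corners μ)
    (h : ¬(c.1 = 0 ∨ c.2 = 0)) : innerm (eraseCorner μ c hc) + 1 = innerm μ := by
  push_neg at h
  unfold innerm
  show ((μ.cells.erase c).filter _).card + 1 = _
  rw [Finset.filter_erase]
  have hmem : c ∈ μ.cells.filter (fun c => c.1 ≠ 0 ∧ c.2 ≠ 0) := by
    simp only [Finset.mem_filter]
    exact ⟨(mem_corners.mp hc).1, h.1, h.2⟩
  rw [Finset.card_erase_of_mem hmem]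
  have : 0 < (μ.cells.filter (fun c => c.1 ≠ 0 ∧ c.2 ≠ 0)).card :=
    Finset.card_pos.mpr ⟨c, hmem⟩
  omega

/-- sum of distinct positive naturals is at least k(k+1)/2 -/
lemma sum_distinct_pos (S : Finset ℕ) (h0 : 0 ∉ S) :
    S.card * (S.card + 1) ≤ 2 * ∑ x ∈ S, x := by
  induction S using Finset.strongInduction with
  | _ S ih =>
    rcases S.eq_empty_or_nonempty with rfl | hne
    · simp
    · have hM : S.max' hne ∈ S := S.max'_mem hne
      have hcard_le : S.card ≤ S.max' hne := by
        have hsub : S ⊆ Finset.Icc 1 (S.max' hne) := by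
          intro x hx
          simp only [Finset.mem_Icc]
          exact ⟨Nat.one_le_iff_ne_zero.mpr (by rintro rfl; exact h0 hx), S.le_max' x hx⟩
        calc S.card ≤ (Finset.Icc 1 (S.max' hne)).card := Finset.card_le_card hsub
          _ = S.max' hne := by simp
      have ih' := ih (S.erase (S.max' hne)) (Finset.erase_ssubset hM)
        (fun hcon => h0 (Finset.mem_of_mem_erase hcon))
      have hsum : ∑ x ∈ S, x = S.max' hne + ∑ x ∈ S.erase (S.max' hne), x :=
        (Finset.add_sum_erase S id hM).symm
      have hce : (S.erase (S.max' hne)).card = S.card - 1 := Finset.card_erase_of_mem hM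
      obtain ⟨k, hk⟩ : ∃ k, S.card = k + 1 :=
        ⟨S.card - 1, by have := Finset.card_pos.mpr hne; omega⟩
      rw [hce, hk] at ih'
      simp only [Nat.add_sub_cancel] at ih'
      rw [hk, hsum]
      nlinarith [hcard_le, ih']

/-- the inner corners -/
def innerCorners (μ : YoungDiagram) : Finset (ℕ × ℕ) :=
  (corners μ).filter (fun c => ¬(c.1 = 0 ∨ c.2 = 0))

lemma innerCorners_count (μ : YoungDiagram) :
    (innerCorners μ).card * ((innerCorners μ).card + 1) ≤ 2 * innerm μ := by
  classical
  -- the image of the second coordinates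
  set S : Finset ℕ := (innerCorners μ).image Prod.snd with hS
  have hinj : ∀ c ∈ innerCorners μ, ∀ c' ∈ innerCorners μ, c.2 = c'.2 → c = c' := by
    intro c hc c' hc' h
    exact corners_eq_of_col_eq (Finset.mem_filter.mp hc).1 (Finset.mem_filter.mp hc').1 h
  have hinj' : Set.InjOn Prod.snd ↑(innerCorners μ) := fun c hc c' hc' h =>
    hinj c (by simpa using hc) c' (by simpa using hc') h
  have hcardS : S.card = (innerCorners μ).card := Finset.card_image_of_injOn hinj'
  have h0S : 0 ∉ S := by
    simp only [hS, Finset.mem_image]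
    rintro ⟨c, hc, hc2⟩
    have := (Finset.mem_filter.mp hc).2
    push_neg at this
    exact this.2 hc2
  have hsum : ∑ x ∈ S, x = ∑ c ∈ innerCorners μ, c.2 := Finset.sum_image hinj
  -- the disjoint union of initial segments of the rows of the inner corners
  set B : Finset (ℕ × ℕ) := (innerCorners μ).biUnion
    (fun c => (Finset.range c.2).image (fun t => (c.1, t + 1))) with hB
  have hcardB : B.card = ∑ c ∈ innerCorners μ, c.2 := by
    rw [hB, Finset.card_biUnion]
    · apply Finset.sum_congr rfl
      intro c _
      rw [Finset.card_image_of_injective _ (fun a b hab => by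
        simpa using congrArg Prod.snd hab), Finset.card_range]
    · intro c hc c' hc' hne
      rw [Function.onFun, Finset.disjoint_left]
      intro a ha ha'
      simp only [Finset.mem_image, Finset.mem_range] at ha ha'
      obtain ⟨t, -, rfl⟩ := ha
      obtain ⟨t', -, ht'⟩ := ha'
      obtain ⟨hfst, -⟩ := Prod.mk.inj ht'
      exact hne (corners_eq_of_row_eq (Finset.mem_filter.mp hc).1
        (Finset.mem_filter.mp hc').1 hfst.symm)
  have hBsub : B ⊆ μ.cells.filter (fun c => c.1 ≠ 0 ∧ c.2 ≠ 0) := by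
    intro a ha
    simp only [hB, Finset.mem_biUnion, Finset.mem_image, Finset.mem_range] at ha
    obtain ⟨c, hc, t, ht, rfl⟩ := ha
    have hcc := (Finset.mem_filter.mp hc).2
    push_neg at hcc
    simp only [Finset.mem_filter]
    refine ⟨?_, hcc.1, by omega⟩
    rw [YoungDiagram.mem_cells]
    exact μ.isLowerSet (by exact ⟨le_rfl, by omega⟩ : (c.1, t + 1) ≤ c)
      ((mem_corners.mp (Finset.mem_filter.mp hc).1).1)
  calc (innerCorners μ).card * ((innerCorners μ).card + 1)
      = S.card * (S.card + 1) := by rw [hcardS]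
    _ ≤ 2 * ∑ x ∈ S, x := sum_distinct_pos S h0S
    _ = 2 * B.card := by rw [hsum, hcardB]
    _ ≤ 2 * innerm μ := by
        have := Finset.card_le_card hBsub
        unfold innerm
        omega

lemma innerm_add_lens (μ : YoungDiagram) (hne : μ.cells.Nonempty) :
    μ.card + 1 = innerm μ + μ.rowLen 0 + μ.colLen 0 := by
  classical
  have hcol : 1 ≤ μ.colLen 0 := by
    obtain ⟨c, hc⟩ := hne
    rw [YoungDiagram.mem_cells] at hc
    have : (0, 0) ∈ μ := μ.isLowerSet (by exact ⟨Nat.zero_le _, Nat.zero_le _⟩) hc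
    rw [YoungDiagram.mem_iff_lt_colLen] at this
    omega
  have h1 : (μ.cells.filter (fun c => c.1 = 0)).card + (μ.cells.filter (fun c => ¬(c.1 = 0))).card
      = μ.card := Finset.card_filter_add_card_filter_not _
  have h2 : ((μ.cells.filter (fun c => ¬(c.1 = 0))).filter (fun c => c.2 = 0)).card
      + ((μ.cells.filter (fun c => ¬(c.1 = 0))).filter (fun c => ¬(c.2 = 0))).card
      = (μ.cells.filter (fun c => ¬(c.1 = 0))).card :=
    Finset.card_filter_add_card_filter_not _
  have hA : (μ.cells.filter (fun c => c.1 = 0)) =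
      (Finset.range (μ.rowLen 0)).image (fun j => ((0 : ℕ), j)) := by
    ext ⟨a, b⟩
    simp only [Finset.mem_filter, Finset.mem_image, Finset.mem_range, YoungDiagram.mem_cells,
      Prod.mk.injEq]
    constructor
    · rintro ⟨hab, rfl⟩
      exact ⟨b, by rwa [← YoungDiagram.mem_iff_lt_rowLen], rfl, rfl⟩
    · rintro ⟨j, hj, rfl, rfl⟩
      exact ⟨by rwa [YoungDiagram.mem_iff_lt_rowLen], rfl⟩
  have hAcard : (μ.cells.filter (fun c => c.1 = 0)).card = μ.rowLen 0 := by
    rw [hA, Finset.card_image_of_injective _ (fun a b hab => by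
      simpa using congrArg Prod.snd hab), Finset.card_range]
  have hBeq : ((μ.cells.filter (fun c => ¬(c.1 = 0))).filter (fun c => c.2 = 0)) =
      (Finset.Ico 1 (μ.colLen 0)).image (fun i => (i, (0 : ℕ))) := by
    ext ⟨a, b⟩
    simp only [Finset.mem_filter, Finset.mem_image, Finset.mem_Ico, YoungDiagram.mem_cells,
      Prod.mk.injEq]
    constructor
    · rintro ⟨⟨hab, ha⟩, rfl⟩
      exact ⟨a, ⟨by omega, by rwa [← YoungDiagram.mem_iff_lt_colLen]⟩, rfl, rfl⟩
    · rintro ⟨i, ⟨hi1, hi2⟩, rfl, rfl⟩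
      exact ⟨⟨by rwa [YoungDiagram.mem_iff_lt_colLen], by omega⟩, rfl⟩
  have hBcard : ((μ.cells.filter (fun c => ¬(c.1 = 0))).filter (fun c => c.2 = 0)).card
      = μ.colLen 0 - 1 := by
    rw [hBeq, Finset.card_image_of_injective _ (fun a b hab => by
      simpa using congrArg Prod.fst hab), Nat.card_Ico]
  have hCeq : ((μ.cells.filter (fun c => ¬(c.1 = 0))).filter (fun c => ¬(c.2 = 0)))
      = μ.cells.filter (fun c => c.1 ≠ 0 ∧ c.2 ≠ 0) := by
    rw [Finset.filter_filter]
  have hCcard : ((μ.cells.filter (fun c => ¬(c.1 = 0))).filter (fun c => ¬(c.2 = 0))).card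
      = innerm μ := by rw [hCeq]; rfl
  rw [hAcard] at h1
  rw [hBcard, hCcard] at h2
  omega

lemma fSYT_card_zero {μ : YoungDiagram} (hμ : μ.card = 0) : fSYT μ = 1 := by
  have hcells : μ.cells = ∅ := Finset.card_eq_zero.mp hμ
  have hnot : ∀ i j : ℕ, (i, j) ∉ μ := by
    intro i j h
    rw [← YoungDiagram.mem_cells, hcells] at h
    exact absurd h (Finset.notMem_empty _)
  rw [fSYT, Nat.card_eq_one_iff_unique]
  constructor
  · constructor
    intro T S
    apply Subtype.ext
    ext i j
    rw [T.1.zeros (hnot i j), S.1.zeros (hnot i j)]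
  · exact ⟨⟨⟨fun _ _ => 0, fun {i j1 j2} _ hm => absurd hm (hnot _ _),
      fun {i1 i2 j} _ hm => absurd hm (hnot _ _), fun _ => rfl⟩,
      fun k hk => absurd hk (by omega)⟩⟩

lemma innerm_le_card (μ : YoungDiagram) : innerm μ ≤ μ.card :=
  Finset.card_filter_le _ _



lemma attach_filter_card {α : Type*} [DecidableEq α] (s : Finset α) (p : α → Prop)
    [DecidablePred p] :
    (s.attach.filter (fun x => p x.1)).card = (s.filter p).card := by
  classical
  rw [← Finset.card_image_of_injOn
    (f := (Subtype.val : {x // x ∈ s} → α)) (Subtype.val_injective.injOn)]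
  congr 1
  ext x
  constructor
  · intro hx
    simp only [Finset.mem_image] at hx
    obtain ⟨a, ha, rfl⟩ := hx
    rw [Finset.mem_filter] at ha ⊢
    exact ⟨a.2, ha.2⟩
  · intro hx
    rw [Finset.mem_filter] at hx
    simp only [Finset.mem_image]
    exact ⟨⟨x, hx.1⟩, Finset.mem_filter.mpr ⟨Finset.mem_attach _ _, hx.2⟩, rfl⟩

lemma special_card_le_two (μ : YoungDiagram) :
    ((corners μ).filter (fun c => c.1 = 0 ∨ c.2 = 0)).card ≤ 2 := by
  classical
  have hsub : (corners μ).filter (fun c => c.1 = 0 ∨ c.2 = 0) ⊆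
      ((corners μ).filter (fun c => c.1 = 0)) ∪ ((corners μ).filter (fun c => c.2 = 0)) := by
    intro c hc
    simp only [Finset.mem_filter, Finset.mem_union] at hc ⊢
    tauto
  have h1 : ((corners μ).filter (fun c => c.1 = 0)).card ≤ 1 := by
    apply Finset.card_le_one.mpr
    intro a ha b hb
    simp only [Finset.mem_filter] at ha hb
    exact corners_eq_of_row_eq ha.1 hb.1 (by rw [ha.2, hb.2])
  have h2 : ((corners μ).filter (fun c => c.2 = 0)).card ≤ 1 := by
    apply Finset.card_le_one.mpr
    intro a ha b hb
    simp only [Finset.mem_filter] at ha hb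
    exact corners_eq_of_col_eq ha.1 hb.1 (by rw [ha.2, hb.2])
  calc ((corners μ).filter (fun c => c.1 = 0 ∨ c.2 = 0)).card
      ≤ _ := Finset.card_le_card hsub
    _ ≤ _ := Finset.card_union_le _ _
    _ ≤ 2 := by omega

/-- The main inductive estimate: `f_μ ≤ 6 ^ |μ| · √(m!)` where `m` is the number of
cells of `μ` outside the first row and column. -/
lemma fSYT_le_main (μ : YoungDiagram) :
    (fSYT μ : ℝ) ≤ 6 ^ μ.card * Real.sqrt (Nat.factorial (innerm μ)) := by
  classical
  suffices H : ∀ N : ℕ, ∀ μ : YoungDiagram, μ.card = N →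
      (fSYT μ : ℝ) ≤ 6 ^ μ.card * Real.sqrt (Nat.factorial (innerm μ)) from
    H μ.card μ rfl
  intro N
  induction N using Nat.strong_induction_on with
  | _ N ih =>
    intro μ hcard
    rcases Nat.eq_zero_or_pos N with rfl | hN
    · rw [fSYT_card_zero hcard]
      have h0 : innerm μ = 0 := le_antisymm (hcard ▸ innerm_le_card μ) (Nat.zero_le _)
      rw [h0, hcard]
      simp
    have hμ0 : μ.card ≠ 0 := by omega
    set M := innerm μ with hM
    have key : (fSYT μ : ℝ) ≤ ∑ c ∈ (corners μ).attach, (fSYT (eraseCorner μ c.1 c.2) : ℝ) := by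
      rw [← Nat.cast_sum]
      exact_mod_cast fSYT_le_sum_corners hμ0
    rw [← Finset.sum_filter_add_sum_filter_not ((corners μ).attach)
      (fun c => (c.1 : ℕ × ℕ).1 = 0 ∨ (c.1 : ℕ × ℕ).2 = 0)] at key
    have hcard' : ∀ c : {x // x ∈ corners μ}, (eraseCorner μ c.1 c.2).card = N - 1 := by
      intro c
      rw [eraseCorner_card, hcard]
    -- bound for the special corners
    have hspecial : ∑ c ∈ ((corners μ).attach.filter
          (fun c => (c.1 : ℕ × ℕ).1 = 0 ∨ (c.1 : ℕ × ℕ).2 = 0)),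
        (fSYT (eraseCorner μ c.1 c.2) : ℝ) ≤
        2 * (6 ^ (N - 1) * Real.sqrt (Nat.factorial M)) := by
      have hterm : ∀ c ∈ ((corners μ).attach.filter
            (fun c => (c.1 : ℕ × ℕ).1 = 0 ∨ (c.1 : ℕ × ℕ).2 = 0)),
          (fSYT (eraseCorner μ c.1 c.2) : ℝ) ≤ 6 ^ (N - 1) * Real.sqrt (Nat.factorial M) := by
        intro c hc
        rw [Finset.mem_filter] at hc
        have h1 := ih (N - 1) (by omega) (eraseCorner μ c.1 c.2) (hcard' c)
        rw [hcard' c, innerm_erase_special c.2 hc.2] at h1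
        exact h1
      have hc2 : ((corners μ).attach.filter
          (fun c => (c.1 : ℕ × ℕ).1 = 0 ∨ (c.1 : ℕ × ℕ).2 = 0)).card ≤ 2 := by
        rw [attach_filter_card (corners μ) (fun c => c.1 = 0 ∨ c.2 = 0)]
        exact special_card_le_two μ
      calc ∑ c ∈ ((corners μ).attach.filter
            (fun c => (c.1 : ℕ × ℕ).1 = 0 ∨ (c.1 : ℕ × ℕ).2 = 0)),
            (fSYT (eraseCorner μ c.1 c.2) : ℝ)
          ≤ ((corners μ).attach.filter
              (fun c => (c.1 : ℕ × ℕ).1 = 0 ∨ (c.1 : ℕ × ℕ).2 = 0)).card •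
            (6 ^ (N - 1) * Real.sqrt (Nat.factorial M)) := Finset.sum_le_card_nsmul _ _ _ hterm
        _ ≤ 2 * (6 ^ (N - 1) * Real.sqrt (Nat.factorial M)) := by
            rw [nsmul_eq_mul]
            apply mul_le_mul_of_nonneg_right _ (by positivity)
            exact_mod_cast hc2
    -- bound for the inner corners
    have hinner : ∑ c ∈ ((corners μ).attach.filter
          (fun c => ¬((c.1 : ℕ × ℕ).1 = 0 ∨ (c.1 : ℕ × ℕ).2 = 0))),
        (fSYT (eraseCorner μ c.1 c.2) : ℝ) ≤
        Real.sqrt 2 * (6 ^ (N - 1) * Real.sqrt (Nat.factorial M)) := by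
      set k := (innerCorners μ).card with hk
      have hkcount : k * (k + 1) ≤ 2 * M := innerCorners_count μ
      have hmap : ((corners μ).attach.filter
          (fun c => ¬((c.1 : ℕ × ℕ).1 = 0 ∨ (c.1 : ℕ × ℕ).2 = 0))).card = k := by
        rw [attach_filter_card (corners μ) (fun c => ¬(c.1 = 0 ∨ c.2 = 0))]
        rfl
      have hterm : ∀ c ∈ ((corners μ).attach.filter
            (fun c => ¬((c.1 : ℕ × ℕ).1 = 0 ∨ (c.1 : ℕ × ℕ).2 = 0))),
          (fSYT (eraseCorner μ c.1 c.2) : ℝ) ≤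
            6 ^ (N - 1) * Real.sqrt (Nat.factorial (M - 1)) := by
        intro c hc
        rw [Finset.mem_filter] at hc
        have h1 := ih (N - 1) (by omega) (eraseCorner μ c.1 c.2) (hcard' c)
        have h2 := innerm_erase_inner c.2 hc.2
        rw [hcard' c] at h1
        have h3 : innerm (eraseCorner μ c.1 c.2) = M - 1 := by omega
        rw [h3] at h1
        exact h1
      have hkey : (k : ℝ) * Real.sqrt (Nat.factorial (M - 1)) ≤
          Real.sqrt 2 * Real.sqrt (Nat.factorial M) := by
        rcases Nat.eq_zero_or_pos k with hk0 | hkpos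
        · rw [hk0]
          push_cast
          rw [zero_mul]
          positivity
        · have hMpos : 1 ≤ M := by nlinarith
          have hfact : Nat.factorial M = M * Nat.factorial (M - 1) := by
            obtain ⟨m, hm⟩ : ∃ m, M = m + 1 := ⟨M - 1, by omega⟩
            rw [hm]
            simp [Nat.factorial_succ]
          have hsq : ((k : ℝ)) ^ 2 * (Nat.factorial (M - 1) : ℝ) ≤
              2 * (Nat.factorial M : ℝ) := by
            rw [hfact]
            push_cast
            have hk2 : ((k : ℝ)) ^ 2 ≤ 2 * (M : ℝ) := by
              have hle : (k * (k + 1) : ℕ) ≤ 2 * M := hkcount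
              have h3 : ((k * (k + 1) : ℕ) : ℝ) ≤ ((2 * M : ℕ) : ℝ) := by exact_mod_cast hle
              push_cast at h3
              nlinarith
            have hfp : (0 : ℝ) < (Nat.factorial (M - 1) : ℝ) := by
              exact_mod_cast Nat.factorial_pos (M - 1)
            nlinarith [hfp, hk2]
          have h5 := Real.sqrt_le_sqrt hsq
          rw [Real.sqrt_mul (by positivity), Real.sqrt_mul (by norm_num),
            Real.sqrt_sq (by positivity)] at h5
          exact h5
      calc ∑ c ∈ ((corners μ).attach.filter
            (fun c => ¬((c.1 : ℕ × ℕ).1 = 0 ∨ (c.1 : ℕ × ℕ).2 = 0))),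
            (fSYT (eraseCorner μ c.1 c.2) : ℝ)
          ≤ ((corners μ).attach.filter
              (fun c => ¬((c.1 : ℕ × ℕ).1 = 0 ∨ (c.1 : ℕ × ℕ).2 = 0))).card •
            (6 ^ (N - 1) * Real.sqrt (Nat.factorial (M - 1))) :=
            Finset.sum_le_card_nsmul _ _ _ hterm
        _ = (k : ℝ) * (6 ^ (N - 1) * Real.sqrt (Nat.factorial (M - 1))) := by
            rw [hmap, nsmul_eq_mul]
        _ = (6 : ℝ) ^ (N - 1) * ((k : ℝ) * Real.sqrt (Nat.factorial (M - 1))) := by ring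
        _ ≤ (6 : ℝ) ^ (N - 1) * (Real.sqrt 2 * Real.sqrt (Nat.factorial M)) :=
            mul_le_mul_of_nonneg_left hkey (by positivity)
        _ = Real.sqrt 2 * (6 ^ (N - 1) * Real.sqrt (Nat.factorial M)) := by ring
    have h6 : (6 : ℝ) ^ N = 6 ^ (N - 1) * 6 := by
      rw [← pow_succ]
      congr 1
      omega
    have hs2 : Real.sqrt 2 ≤ 2 := by
      nlinarith [Real.sq_sqrt (by norm_num : (0 : ℝ) ≤ 2), Real.sqrt_nonneg 2]
    rw [hcard]
    calc (fSYT μ : ℝ) ≤ _ := key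
      _ ≤ 2 * (6 ^ (N - 1) * Real.sqrt (Nat.factorial M)) +
          Real.sqrt 2 * (6 ^ (N - 1) * Real.sqrt (Nat.factorial M)) :=
        add_le_add hspecial hinner
      _ = (2 + Real.sqrt 2) * (6 ^ (N - 1) * Real.sqrt (Nat.factorial M)) := by ring
      _ ≤ 6 * (6 ^ (N - 1) * Real.sqrt (Nat.factorial M)) := by
        apply mul_le_mul_of_nonneg_right _ (by positivity)
        linarith
      _ = 6 ^ N * Real.sqrt (Nat.factorial M) := by rw [h6]; ring



theorem fSYT_bound :
    ∃ C : ℝ, 0 < C ∧ ∀ n : ℕ, 1 ≤ n → ∀ d dstar : ℝ,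
      0 ≤ d → d < 2 → 0 ≤ dstar → dstar < 2 →
      ∀ lam : YoungDiagram, lam.card = 2 * n →
        d * n ≤ (lam.rowLen 0 : ℝ) → dstar * n ≤ (lam.colLen 0 : ℝ) →
        (fSYT lam : ℝ) ^ 2 ≤
          Real.exp ((2 - d - dstar) * n * Real.log n + C * n) := by
  classical
  refine ⟨4 * Real.log 6 + 3 * Real.log 3 + 1, ?_, ?_⟩
  · have h6 : 0 < Real.log 6 := Real.log_pos (by norm_num)
    have h3 : 0 < Real.log 3 := Real.log_pos (by norm_num)
    linarith
  intro n hn d dstar hd hd2 hds hds2 lam hlam hrow hcol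
  set M := innerm lam with hMdef
  have hn1 : (1 : ℝ) ≤ (n : ℝ) := by exact_mod_cast hn
  have hnpos : (0 : ℝ) < (n : ℝ) := by linarith
  -- the partition identity
  have hne : lam.cells.Nonempty := by
    rw [← Finset.card_pos]
    show 0 < lam.card
    omega
  have hlens := innerm_add_lens lam hne
  have hlensR : (lam.card : ℝ) + 1 = (M : ℝ) + (lam.rowLen 0 : ℝ) + (lam.colLen 0 : ℝ) := by
    exact_mod_cast hlens
  have hcardR : (lam.card : ℝ) = 2 * n := by exact_mod_cast hlam
  set B : ℝ := (2 - d - dstar) * n + 1 with hB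
  have hMB : (M : ℝ) ≤ B := by
    rw [hB]
    nlinarith [hrow, hcol, hlensR, hcardR]
  have hM0 : (0 : ℝ) ≤ (M : ℝ) := Nat.cast_nonneg M
  have hB0 : (0 : ℝ) ≤ B := le_trans hM0 hMB
  have hM3n : (M : ℝ) ≤ 3 * n := by nlinarith [hlensR, hcardR,
    (by exact_mod_cast Nat.zero_le (lam.rowLen 0) : (0:ℝ) ≤ (lam.rowLen 0 : ℝ)),
    (by exact_mod_cast Nat.zero_le (lam.colLen 0) : (0:ℝ) ≤ (lam.colLen 0 : ℝ))]
  have hB3n : B ≤ 3 * n := by rw [hB]; nlinarith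
  have hlog3n : (0 : ℝ) ≤ Real.log (3 * n) :=
    Real.log_nonneg (by linarith)
  have hlogn : (0 : ℝ) ≤ Real.log n := Real.log_nonneg hn1
  have hlognn : Real.log n ≤ n := by
    have := Real.log_le_sub_one_of_pos hnpos
    linarith
  have hlog3 : (0 : ℝ) ≤ Real.log 3 := Real.log_nonneg (by norm_num)
  -- step 1 : square the main bound
  have h1 := fSYT_le_main lam
  have hf0 : (0 : ℝ) ≤ (fSYT lam : ℝ) := Nat.cast_nonneg _
  have h2 : (fSYT lam : ℝ) ^ 2 ≤ (6 ^ lam.card * Real.sqrt (Nat.factorial M)) ^ 2 :=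
    pow_le_pow_left₀ hf0 h1 2
  have h3 : (6 ^ lam.card * Real.sqrt (Nat.factorial M) : ℝ) ^ 2 =
      (6 ^ lam.card : ℝ) ^ 2 * (Nat.factorial M : ℝ) := by
    rw [mul_pow, Real.sq_sqrt (by positivity)]
  -- step 2 : take logarithms
  have hppos : (0 : ℝ) < (6 ^ lam.card : ℝ) ^ 2 * (Nat.factorial M : ℝ) := by positivity
  have hlogfact : Real.log (Nat.factorial M : ℝ) ≤ (M : ℝ) * Real.log M := by
    have hle : (Nat.factorial M : ℝ) ≤ ((M ^ M : ℕ) : ℝ) := by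
      exact_mod_cast Nat.factorial_le_pow M
    calc Real.log (Nat.factorial M : ℝ) ≤ Real.log ((M ^ M : ℕ) : ℝ) :=
          Real.log_le_log (by positivity) hle
      _ = (M : ℝ) * Real.log M := by
          push_cast
          rw [Real.log_pow]
  have hMlogM : (M : ℝ) * Real.log M ≤ B * Real.log (3 * n) := by
    have hstep : (M : ℝ) * Real.log M ≤ (M : ℝ) * Real.log (3 * n) := by
      rcases Nat.eq_zero_or_pos M with hM00 | hMpos
      · simp [hM00]
      · have hMposR : (0 : ℝ) < (M : ℝ) := by exact_mod_cast hMpos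
        apply mul_le_mul_of_nonneg_left _ hM0
        exact Real.log_le_log hMposR hM3n
    calc (M : ℝ) * Real.log M ≤ (M : ℝ) * Real.log (3 * n) := hstep
      _ ≤ B * Real.log (3 * n) := mul_le_mul_of_nonneg_right hMB hlog3n
  have hBlog : B * Real.log (3 * n) ≤ (2 - d - dstar) * n * Real.log n + n + 3 * n * Real.log 3 := by
    have hsplit : Real.log (3 * n) = Real.log 3 + Real.log n :=
      Real.log_mul (by norm_num) (by positivity)
    rw [hsplit]
    have e1 : B * Real.log n = (2 - d - dstar) * n * Real.log n + Real.log n := by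
      rw [hB]; ring
    have e2 : B * Real.log 3 ≤ 3 * n * Real.log 3 :=
      mul_le_mul_of_nonneg_right hB3n hlog3
    calc B * (Real.log 3 + Real.log n) = B * Real.log n + B * Real.log 3 := by ring
      _ ≤ ((2 - d - dstar) * n * Real.log n + Real.log n) + 3 * n * Real.log 3 :=
          add_le_add (le_of_eq e1) e2
      _ ≤ (2 - d - dstar) * n * Real.log n + n + 3 * n * Real.log 3 := by linarith [hlognn]
  have hlog6 : Real.log ((6 ^ lam.card : ℝ) ^ 2) = 4 * n * Real.log 6 := by
    rw [← pow_mul, Real.log_pow, hlam]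
    push_cast
    ring
  -- put the logarithmic estimates together
  have hkey : Real.log ((6 ^ lam.card : ℝ) ^ 2 * (Nat.factorial M : ℝ)) ≤
      (2 - d - dstar) * n * Real.log n + (4 * Real.log 6 + 3 * Real.log 3 + 1) * n := by
    rw [Real.log_mul (by positivity) (by positivity), hlog6]
    have : Real.log (Nat.factorial M : ℝ) ≤
        (2 - d - dstar) * n * Real.log n + n + 3 * n * Real.log 3 :=
      le_trans hlogfact (le_trans hMlogM hBlog)
    linarith [this]
  calc (fSYT lam : ℝ) ^ 2 ≤ (6 ^ lam.card : ℝ) ^ 2 * (Nat.factorial M : ℝ) := by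
        rw [← h3]; exact h2
    _ = Real.exp (Real.log ((6 ^ lam.card : ℝ) ^ 2 * (Nat.factorial M : ℝ))) :=
        (Real.exp_log hppos).symm
    _ ≤ Real.exp ((2 - d - dstar) * n * Real.log n + (4 * Real.log 6 + 3 * Real.log 3 + 1) * n) :=
        Real.exp_le_exp.mpr hkey


end BRT
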